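/- Let α : ZMod 5 → ℤ satisfy α(k) = Σ_{i ∈ ZMod 5} α(2i − k)·α(i) for every k ∈ ZMod 5, together with Σ_{i ∈ ZMod 5} α(i) = 1. Then there exists j ∈ ZMod 5 such that α(j) = 1 and α(i) = 0 for all i ≠ j. In other words, the only idempotents of the integral quandle ring ℤ[Q_5] with coefficient sum 1 are the basis elements x_j. -/

import Mathlib

theorem keyfin_aux (a0 a1 a2 a3 a4 : ℤ) (hs : a0+a1+a2+a3+a4 = 1)
    (hp : a0*a0+a1*a1+a2*a2+a3*a3+a4*a4 = 1) :
    (a0=1∧a1=0∧a2=0∧a3=0∧a4=0) ∨ (a0=0∧a1=1∧a2=0∧a3=0∧a4=0) ∨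
    (a0=0∧a1=0∧a2=1∧a3=0∧a4=0) ∨ (a0=0∧a1=0∧a2=0∧a3=1∧a4=0) ∨
    (a0=0∧a1=0∧a2=0∧a3=0∧a4=1) := by
  have n0 := mul_self_nonneg a0
  have n1 := mul_self_nonneg a1
  have n2 := mul_self_nonneg a2
  have n3 := mul_self_nonneg a3
  have n4 := mul_self_nonneg a4
  have b0 : -1 ≤ a0 ∧ a0 ≤ 1 := ⟨by nlinarith, by nlinarith⟩
  have b1 : -1 ≤ a1 ∧ a1 ≤ 1 := ⟨by nlinarith, by nlinarith⟩
  have b2 : -1 ≤ a2 ∧ a2 ≤ 1 := ⟨by nlinarith, by nlinarith⟩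
  have b3 : -1 ≤ a3 ∧ a3 ≤ 1 := ⟨by nlinarith, by nlinarith⟩
  have b4 : -1 ≤ a4 ∧ a4 ≤ 1 := ⟨by nlinarith, by nlinarith⟩
  obtain ⟨b0l, b0r⟩ := b0
  obtain ⟨b1l, b1r⟩ := b1
  obtain ⟨b2l, b2r⟩ := b2
  obtain ⟨b3l, b3r⟩ := b3
  obtain ⟨b4l, b4r⟩ := b4
  interval_cases a0 <;> interval_cases a1 <;> interval_cases a2 <;>
    interval_cases a3 <;> interval_cases a4 <;> omega

/-- The only idempotents of the integral quandle ring `ℤ[Q₅]` with coefficient sum 1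
are the basis elements. -/
theorem stmt_1 (α : ZMod 5 → ℤ)
    (hidem : ∀ k : ZMod 5, α k = ∑ i : ZMod 5, α (2 * i - k) * α i)
    (hsum : ∑ i : ZMod 5, α i = 1) :
    ∃ j : ZMod 5, α j = 1 ∧ ∀ i : ZMod 5, i ≠ j → α i = 0 := by
  have expand : ∀ f : ZMod 5 → ℤ, ∑ i, f i = f 0 + f 1 + f 2 + f 3 + f 4 := by
    intro f
    show ∑ i : Fin 5, f i = _
    exact Fin.sum_univ_five (f := f)
  have hs : α 0 + α 1 + α 2 + α 3 + α 4 = 1 := by rw [← expand]; exact hsum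
  have h0 : α 0 = α 0 * α 0 + α 2 * α 1 + α 4 * α 2 + α 1 * α 3 + α 3 * α 4 := by
    have h := hidem 0
    rw [expand] at h
    simpa only [show ((2:ZMod 5) * 0 - 0 = 0) from by decide, show ((2:ZMod 5) * 1 - 0 = 2) from by decide, show ((2:ZMod 5) * 2 - 0 = 4) from by decide, show ((2:ZMod 5) * 3 - 0 = 1) from by decide, show ((2:ZMod 5) * 4 - 0 = 3) from by decide] using h
  have h1 : α 1 = α 4 * α 0 + α 1 * α 1 + α 3 * α 2 + α 0 * α 3 + α 2 * α 4 := by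
    have h := hidem 1
    rw [expand] at h
    simpa only [show ((2:ZMod 5) * 0 - 1 = 4) from by decide, show ((2:ZMod 5) * 1 - 1 = 1) from by decide, show ((2:ZMod 5) * 2 - 1 = 3) from by decide, show ((2:ZMod 5) * 3 - 1 = 0) from by decide, show ((2:ZMod 5) * 4 - 1 = 2) from by decide] using h
  have h2 : α 2 = α 3 * α 0 + α 0 * α 1 + α 2 * α 2 + α 4 * α 3 + α 1 * α 4 := by
    have h := hidem 2
    rw [expand] at h
    simpa only [show ((2:ZMod 5) * 0 - 2 = 3) from by decide, show ((2:ZMod 5) * 1 - 2 = 0) from by decide, show ((2:ZMod 5) * 2 - 2 = 2) from by decide, show ((2:ZMod 5) * 3 - 2 = 4) from by decide, show ((2:ZMod 5) * 4 - 2 = 1) from by decide] using h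
  have h3 : α 3 = α 2 * α 0 + α 4 * α 1 + α 1 * α 2 + α 3 * α 3 + α 0 * α 4 := by
    have h := hidem 3
    rw [expand] at h
    simpa only [show ((2:ZMod 5) * 0 - 3 = 2) from by decide, show ((2:ZMod 5) * 1 - 3 = 4) from by decide, show ((2:ZMod 5) * 2 - 3 = 1) from by decide, show ((2:ZMod 5) * 3 - 3 = 3) from by decide, show ((2:ZMod 5) * 4 - 3 = 0) from by decide] using h
  have h4 : α 4 = α 1 * α 0 + α 3 * α 1 + α 0 * α 2 + α 2 * α 3 + α 4 * α 4 := by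
    have h := hidem 4
    rw [expand] at h
    simpa only [show ((2:ZMod 5) * 0 - 4 = 1) from by decide, show ((2:ZMod 5) * 1 - 4 = 3) from by decide, show ((2:ZMod 5) * 2 - 4 = 0) from by decide, show ((2:ZMod 5) * 3 - 4 = 2) from by decide, show ((2:ZMod 5) * 4 - 4 = 4) from by decide] using h
  have hq : (α 0*α 1+α 1*α 2+α 2*α 3+α 3*α 4+α 4*α 0) = (α 0*α 2+α 1*α 3+α 2*α 4+α 3*α 0+α 4*α 1) := by
    linear_combination ((-1)*α 1 + 1*α 3 + (-1)*α 0*α 2 + 1*α 0*α 3 + 2*α 1*α 1 + (-2)*α 1*α 2 + 1*α 1*α 3 + (-3)*α 1*α 4 + (-1)*α 2*α 2 + 3*α 2*α 3 + 2*α 2*α 4 + (-2)*α 3*α 3 + (-1)*α 3*α 4 + 1*α 4*α 4) * h0 + (2*α 0 + (-1)*α 3 + (-1)*α 0*α 0 + (-1)*α 0*α 2 + 1*α 0*α 3 + (-1)*α 1*α 2 + (-2)*α 1*α 3 + 1*α 1*α 4 + 1*α 2*α 2 + (-1)*α 2*α 3 + (-1)*α 2*α 4 + (-1)*α 4*α 4)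 * h1 + ((-1)*α 0 + 1*α 1 + (-1)*α 3 + (-1)*α 0*α 1 + 1*α 0*α 2 + 2*α 0*α 4 + 2*α 1*α 2 + (-1)*α 1*α 3 + 2*α 1*α 4 + (-1)*α 2*α 3 + 2*α 3*α 3 + (-1)*α 4*α 4) * h2 + ((-2)*α 0 + 2*α 2 + 1*α 0*α 0 + 1*α 0*α 2 + (-2)*α 0*α 3 + (-1)*α 0*α 4 + (-1)*α 1*α 1 + 1*α 1*α 2 + 2*α 1*α 3 + (-1)*α 1*α 4 + (-1)*α 2*α 2 + 1*α 4*α 4) * h3 + (1*α 0 + (-1)*α 1 + (-1)*α 2 + 1*α 3) * h4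
  have hF2 : 2*(((α 0*α 0+α 1*α 1+α 2*α 2+α 3*α 3+α 4*α 4) - (α 0*α 1+α 1*α 2+α 2*α 3+α 3*α 4+α 4*α 0))*((α 0*α 0+α 1*α 1+α 2*α 2+α 3*α 3+α 4*α 4) - (α 0*α 1+α 1*α 2+α 2*α 3+α 3*α 4+α 4*α 0)) - ((α 0*α 0+α 1*α 1+α 2*α 2+α 3*α 3+α 4*α 4) - (α 0*α 1+α 1*α 2+α 2*α 3+α 3*α 4+α 4*α 0))) = 0 := by
    linear_combination (-(2*α 0 + 3*α 1 + (-2)*α 2 + (-1)*α 3 + 2*α 4 + 2*α 0*α 0 + (-2)*α 0*α 1 + (-3)*α 0*α 2 + (-3)*α 0*α 3 + (-4)*α 0*α 4 + (-4)*α 1*α 1 + 2*α 1*α 2 + (-1)*α 1*α 3 + 1*α 1*α 4 + 1*α 2*α 2 + (-7)*α 2*α 3 + (-2)*α 2*α 4 + 3*α 3*α 4 + (-3)*α 4*α 4)) * h0 + (-((-4)*α 0 + 2*α 1 + 2*α 2 + 1*α 3 + (-2)*α 4 + 3*α 0*α 0 + (-2)*α 0*α 1 + (-1)*α 0*α 2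 + (-1)*α 0*α 3 + 2*α 1*α 1 + 1*α 1*α 2 + 4*α 1*α 3 + (-5)*α 1*α 4 + (-3)*α 2*α 2 + 3*α 2*α 3 + 5*α 2*α 4 + (-2)*α 3*α 3 + 1*α 4*α 4)) * h1 + (-(1*α 0 + (-3)*α 1 + 2*α 2 + 1*α 3 + (-2)*α 4 + (-2)*α 0*α 0 + 3*α 0*α 1 + (-1)*α 0*α 2 + 4*α 0*α 3 + 2*α 1*α 1 + (-4)*α 1*α 2 + (-1)*α 1*α 3 + 2*α 2*α 2 + 3*α 2*α 3 + (-2)*α 3*α 3 + 1*α 4*α 4)) * h2 + (-((-2)*α 1 + (-2)*α 2 + 2*α 3 + (-1)*α 0*α 0 + 1*α 0*α 2 + 2*α 0*α 3 + 3*α 0*α 4 + 1*α 1*α 1 + 1*α 1*α 2 + (-2)*α 1*α 3 + 3*α 1*α 4 + 1*α 2*α 2 + 2*α 3*α 3 + (-1)*α 4*α 4)) * h3 + (-((-3)*α 0 + 1*α 1 + 1*α 2 + (-1)*α 3 + 2*α 4 + 2*α 0*α 0 + 2*α 0*α 2 + (-4)*α 0*α 3 + (-2)*α 0*α 4 + (-2)*α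 1*α 1 + 2*α 1*α 2 + 4*α 1*α 3 + (-2)*α 1*α 4 + (-2)*α 2*α 2 + 2*α 4*α 4)) * h4 + (-2*(α 0*α 0+α 1*α 1+α 2*α 2+α 3*α 3+α 4*α 4) + 4*(α 0*α 1+α 1*α 2+α 2*α 3+α 3*α 4+α 4*α 0) - 2*(α 0*α 2+α 1*α 3+α 2*α 4+α 3*α 0+α 4*α 1) + 1) * hq
  have hF3 : (α 0*α 0+α 1*α 1+α 2*α 2+α 3*α 3+α 4*α 4) + 2*(α 0*α 1+α 1*α 2+α 2*α 3+α 3*α 4+α 4*α 0) + 2*(α 0*α 2+α 1*α 3+α 2*α 4+α 3*α 0+α 4*α 1) = 1 := by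
    linear_combination (α 0 + α 1 + α 2 + α 3 + α 4 + 1) * hs
  obtain ⟨p, hpd⟩ : ∃ x, (α 0*α 0+α 1*α 1+α 2*α 2+α 3*α 3+α 4*α 4) = x := ⟨_, rfl⟩
  obtain ⟨u, hud⟩ : ∃ x, (α 0*α 1+α 1*α 2+α 2*α 3+α 3*α 4+α 4*α 0) = x := ⟨_, rfl⟩
  obtain ⟨w, hwd⟩ : ∃ x, (α 0*α 2+α 1*α 3+α 2*α 4+α 3*α 0+α 4*α 1) = x := ⟨_, rfl⟩
  rw [hud, hwd] at hq
  rw [hpd, hud] at hF2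
  rw [hpd, hud, hwd] at hF3
  have h2t : ((p - u) * (p - u - 1)) * 2 = 0 := by linear_combination hF2
  have hfac : (p - u) * (p - u - 1) = 0 :=
    (mul_eq_zero.mp h2t).resolve_right (by norm_num)
  have h01 : p - u = 0 ∨ p - u - 1 = 0 := mul_eq_zero.mp hfac
  have hp1 : p = 1 := by omega
  rw [hp1] at hpd
  rcases keyfin_aux (α 0) (α 1) (α 2) (α 3) (α 4) hs (by linear_combination hpd) with
    h | h | h | h | h
  · refine ⟨0, h.1, ?_⟩
    intro i hi
    have : i = 1 ∨ i = 2 ∨ i = 3 ∨ i = 4 := by revert hi; revert i; decide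
    rcases this with rfl | rfl | rfl | rfl <;> tauto
  · refine ⟨1, h.2.1, ?_⟩
    intro i hi
    have : i = 0 ∨ i = 2 ∨ i = 3 ∨ i = 4 := by revert hi; revert i; decide
    rcases this with rfl | rfl | rfl | rfl <;> tauto
  · refine ⟨2, h.2.2.1, ?_⟩
    intro i hi
    have : i = 0 ∨ i = 1 ∨ i = 3 ∨ i = 4 := by revert hi; revert i; decide
    rcases this with rfl | rfl | rfl | rfl <;> tauto
  · refine ⟨3, h.2.2.2.1, ?_⟩
    intro i hi
    have : i = 0 ∨ i = 1 ∨ i = 2 ∨ i = 4 := by revert hi; revert i; decide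
    rcases this with rfl | rfl | rfl | rfl <;> tauto
  · refine ⟨4, h.2.2.2.2, ?_⟩
    intro i hi
    have : i = 0 ∨ i = 1 ∨ i = 2 ∨ i = 3 := by revert hi; revert i; decide
    rcases this with rfl | rfl | rfl | rfl <;> tauto
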